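/- Let σ∨ be a full-dimensional strictly convex rational polyhedral cone with primitive ray generators u₁,…,u_s. Then λ_max: σ∨ → ℝ is piecewise linear; more precisely, σ∨ is the union of the cones over the lower faces of Q = conv{u₁,…,u_s}, and λ_max is linear on the cone over each lower face of Q. -/

import Mathlib

open Finset

noncomputable section

/-- Conical Carathéodory: any nonnegative combination supported on `J` can be rewritten as a
nonnegative combination over a subset with linearly independent vectors. -/
lemma cone_caratheodory {E : Type*} [AddCommGroup E] [Module ℝ E] {ι : Type*} [DecidableEq ι]
    (w : ι → E) (J : Finset ι) :
    ∀ a : ι → ℝ, (∀ i, 0 ≤ a i) →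
    ∃ J' : Finset ι, J' ⊆ J ∧ LinearIndependent ℝ (fun j : J' => w j) ∧
      ∃ b : ι → ℝ, (∀ i, 0 ≤ b i) ∧ ∑ i ∈ J', b i • w i = ∑ i ∈ J, a i • w i := by
  induction J using Finset.strongInduction with
  | _ J IH =>
    intro a ha
    by_cases hli : LinearIndependent ℝ (fun j : J => w j)
    · exact ⟨J, le_refl _, hli, a, ha, rfl⟩
    · obtain ⟨g, hg0, j₁, hj₁⟩ := Fintype.not_linearIndependent_iff.mp hli
      set c : ι → ℝ := fun i => if h : i ∈ J then g ⟨i, h⟩ else 0 with hc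
      have hcsum : ∑ i ∈ J, c i • w i = 0 := by
        rw [← Finset.sum_attach J (fun i => c i • w i)]
        rw [← hg0]
        apply Finset.sum_congr rfl
        intro j _
        simp [hc, j.2]
      have key : ∀ c : ι → ℝ, (∑ i ∈ J, c i • w i = 0) → (∃ j ∈ J, 0 < c j) →
          ∃ J' : Finset ι, J' ⊆ J ∧ LinearIndependent ℝ (fun j : J' => w j) ∧
          ∃ b : ι → ℝ, (∀ i, 0 ≤ b i) ∧ ∑ i ∈ J', b i • w i = ∑ i ∈ J, a i • w i := by
        intro c hcs ⟨jp, hjpJ, hjp⟩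
        set Jpos := J.filter (fun j => 0 < c j) with hJpos
        have hne : Jpos.Nonempty := ⟨jp, Finset.mem_filter.mpr ⟨hjpJ, hjp⟩⟩
        obtain ⟨j₀, hj₀, hmin⟩ := Finset.exists_min_image Jpos (fun j => a j / c j) hne
        have hj₀J : j₀ ∈ J := (Finset.mem_filter.mp hj₀).1
        have hcj₀ : 0 < c j₀ := (Finset.mem_filter.mp hj₀).2
        set t := a j₀ / c j₀ with hts
        have ht : 0 ≤ t := div_nonneg (ha _) hcj₀.le
        set b : ι → ℝ := fun i => if i ∈ J then a i - t * c i else a i with hb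
        have hbnn : ∀ i, 0 ≤ b i := by
          intro i
          simp only [hb]
          split_ifs with hiJ
          · rcases le_or_gt (c i) 0 with h | h
            · have : t * c i ≤ 0 := mul_nonpos_of_nonneg_of_nonpos ht h
              linarith [ha i]
            · have hi : i ∈ Jpos := Finset.mem_filter.mpr ⟨hiJ, h⟩
              have := hmin i hi
              rw [hts] at *
              have : t ≤ a i / c i := this
              have := (le_div_iff₀ h).mp this
              linarith
          · exact ha i
        have hbj₀ : b j₀ = 0 := by
          simp only [hb, if_pos hj₀J, hts]
          field_simp
          ring
        have hbsum : ∑ i ∈ J.erase j₀, b i • w i = ∑ i ∈ J, a i • w i := by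
          rw [Finset.sum_erase _ (by rw [hbj₀, zero_smul])]
          have : ∑ i ∈ J, b i • w i = ∑ i ∈ J, (a i • w i - (t * c i) • w i) := by
            apply Finset.sum_congr rfl
            intro i hi
            simp only [hb, if_pos hi, sub_smul]
          rw [this, Finset.sum_sub_distrib]
          have : ∑ i ∈ J, (t * c i) • w i = t • ∑ i ∈ J, c i • w i := by
            rw [Finset.smul_sum]
            exact Finset.sum_congr rfl fun i _ => by rw [smul_smul]
          rw [this, hcs, smul_zero, sub_zero]
        obtain ⟨J', hJ'sub, hJ'li, b', hb'nn, hb'sum⟩ :=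
          IH (J.erase j₀) (Finset.erase_ssubset hj₀J) b hbnn
        exact ⟨J', hJ'sub.trans (Finset.erase_subset _ _), hJ'li, b', hb'nn,
          by rw [hb'sum, hbsum]⟩
      rcases lt_trichotomy (g j₁) 0 with h | h | h
      · refine key (fun i => -c i) ?_ ⟨j₁, j₁.2, ?_⟩
        · simp only [neg_smul, Finset.sum_neg_distrib, hcsum, neg_zero]
        · simp only [hc, dif_pos j₁.2]
          cases j₁ with
          | mk v p => simpa using h
      · exact absurd h hj₁
      · refine key c hcsum ⟨j₁, j₁.2, ?_⟩
        simp only [hc, dif_pos j₁.2]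
        cases j₁ with
        | mk v p => simpa using h

/-- A finitely generated convex cone in a finite-dimensional normed space is closed. -/
lemma isClosed_cone {E : Type*} [NormedAddCommGroup E] [NormedSpace ℝ E]
    [FiniteDimensional ℝ E] {ι : Type*} [Fintype ι] [DecidableEq ι] (w : ι → E) :
    IsClosed {x : E | ∃ a : ι → ℝ, (∀ i, 0 ≤ a i) ∧ x = ∑ i, a i • w i} := by
  have heq : {x : E | ∃ a : ι → ℝ, (∀ i, 0 ≤ a i) ∧ x = ∑ i, a i • w i} =
      ⋃ (J : Finset ι) (_ : LinearIndependent ℝ (fun j : J => w j)),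
        {x : E | ∃ b : J → ℝ, (∀ j, 0 ≤ b j) ∧ x = ∑ j, b j • w j} := by
    ext x
    simp only [Set.mem_setOf_eq, Set.mem_iUnion]
    constructor
    · rintro ⟨a, ha, rfl⟩
      obtain ⟨J', hsub, hli, b, hbnn, hbsum⟩ :=
        cone_caratheodory w Finset.univ a ha
      refine ⟨J', hli, fun j => b j, fun j => hbnn j, ?_⟩
      rw [← hbsum, ← Finset.sum_attach J' (fun i => b i • w i)]
      rfl
    · rintro ⟨J, hli, b, hbnn, rfl⟩
      refine ⟨fun i => if h : i ∈ J then b ⟨i, h⟩ else 0, fun i => ?_, ?_⟩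
      · dsimp only; split_ifs with h
        · exact hbnn _
        · exact le_refl 0
      · rw [← Finset.sum_subset (Finset.subset_univ J)
            (fun i _ hiJ => by simp only [dif_neg hiJ, zero_smul]),
          ← Finset.sum_attach J (fun i => (if h : i ∈ J then b ⟨i, h⟩ else 0) • w i)]
        exact Finset.sum_congr rfl (fun j _ => by rw [dif_pos j.2])
  rw [heq]
  apply isClosed_iUnion_of_finite
  intro J
  apply isClosed_iUnion_of_finite
  intro hli
  have hφ : ∃ φ : (J → ℝ) →ₗ[ℝ] E, ∀ b : J → ℝ, φ b = ∑ j, b j • w j := by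
    refine ⟨{ toFun := fun b => ∑ j, b j • w j, map_add' := ?_, map_smul' := ?_ }, fun b => rfl⟩
    · intro b b'; simp [add_smul, Finset.sum_add_distrib]
    · intro c b; simp [mul_smul, Finset.smul_sum]
  obtain ⟨φ, hφ⟩ := hφ
  have hinj : Function.Injective φ := by
    have hker : ∀ b : J → ℝ, φ b = 0 → b = 0 := by
      intro b hb
      funext j
      exact Fintype.linearIndependent_iff.mp hli b (by rw [← hφ]; exact hb) j
    intro b b' h
    have : φ (b - b') = 0 := by rw [map_sub, h, sub_self]
    have := hker _ this
    exact sub_eq_zero.mp (by funext j; exact congrFun this j)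
  have hclosed : IsClosed {b : J → ℝ | ∀ j, 0 ≤ b j} := by
    have : {b : J → ℝ | ∀ j, 0 ≤ b j} = ⋂ j, {b | 0 ≤ b j} := by
      ext b; simp [Set.mem_iInter]
    rw [this]
    exact isClosed_iInter fun j => isClosed_le continuous_const (continuous_apply j)
  have himg : {x : E | ∃ b : J → ℝ, (∀ j, 0 ≤ b j) ∧ x = ∑ j, b j • w j} =
      φ '' {b : J → ℝ | ∀ j, 0 ≤ b j} := by
    ext x
    simp only [Set.mem_setOf_eq, Set.mem_image]
    constructor
    · rintro ⟨b, hb, rfl⟩; exact ⟨b, hb, (hφ b)⟩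
    · rintro ⟨b, hb, rfl⟩; exact ⟨b, hb, (hφ b)⟩
  rw [himg]
  exact (φ.isClosedEmbedding_of_injective (LinearMap.ker_eq_bot.mpr hinj)).isClosedMap _ hclosed


/-- The convex polyhedral cone generated by the vectors `u i`. -/
def coneOf {n : ℕ} {ι : Type*} [Fintype ι] (u : ι → (Fin n → ℝ)) : Set (Fin n → ℝ) :=
  {x | ∃ a : ι → ℝ, (∀ i, 0 ≤ a i) ∧ x = ∑ i, a i • u i}

/-- The set of coefficient sums of nonnegative representations of `x` in terms of `u`. -/
def reprSums {n : ℕ} {ι : Type*} [Fintype ι] (u : ι → (Fin n → ℝ)) (x : Fin n → ℝ) :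
    Set ℝ :=
  {t | ∃ a : ι → ℝ, (∀ i, 0 ≤ a i) ∧ x = ∑ i, a i • u i ∧ t = ∑ i, a i}

/-- `λ_min`: the minimal coefficient sum of a nonnegative representation. -/
noncomputable def lamMin {n : ℕ} {ι : Type*} [Fintype ι] (u : ι → (Fin n → ℝ))
    (x : Fin n → ℝ) : ℝ :=
  sInf (reprSums u x)

/-- `λ_max`: the maximal coefficient sum of a nonnegative representation. -/
noncomputable def lamMax {n : ℕ} {ι : Type*} [Fintype ι] (u : ι → (Fin n → ℝ))
    (x : Fin n → ℝ) : ℝ :=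
  sSup (reprSums u x)

/-- A lattice point: all coordinates are integers. -/
def IsLatticePt {n : ℕ} (x : Fin n → ℝ) : Prop := ∀ j, ∃ z : ℤ, x j = (z : ℝ)

/-- A primitive lattice vector: the smallest nonzero lattice point on its ray. -/
def IsPrimitive {n : ℕ} (x : Fin n → ℝ) : Prop :=
  IsLatticePt x ∧ x ≠ 0 ∧ ∀ c : ℝ, 0 < c → IsLatticePt (c • x) → 1 ≤ c

/-- Strict convexity (pointedness) of the cone generated by `u`. -/
def PointedGens {n : ℕ} {ι : Type*} [Fintype ι] (u : ι → (Fin n → ℝ)) : Prop :=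
  ∀ x, x ∈ coneOf u → -x ∈ coneOf u → x = 0

/-- Full-dimensionality of the cone generated by `u`. -/
def FullDim {n : ℕ} {ι : Type*} [Fintype ι] (u : ι → (Fin n → ℝ)) : Prop :=
  Submodule.span ℝ (Set.range u) = ⊤

/-- Each `u i` spans an extremal ray: it is not in the cone generated by the others. -/
def ExtremalGens {n : ℕ} {ι : Type*} [Fintype ι] [DecidableEq ι]
    (u : ι → (Fin n → ℝ)) : Prop :=
  ∀ i, u i ∉ coneOf (fun j : {j : ι // j ≠ i} => u j.1)

/-- The standard pairing between `M ⊗ ℝ` and `N ⊗ ℝ`. -/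
def pairing {n : ℕ} (x v : Fin n → ℝ) : ℝ := ∑ j, x j * v j

section Helpers

variable {n s : ℕ} (u : Fin s → (Fin n → ℝ))

/-- Membership in Q = convexHull of the generators. -/
lemma memQ_iff (x : Fin n → ℝ) :
    x ∈ convexHull ℝ (Set.range u) ↔
      ∃ a : Fin s → ℝ, (∀ i, 0 ≤ a i) ∧ ∑ i, a i = 1 ∧ x = ∑ i, a i • u i := by
  constructor
  · intro hx
    have hsub : convexHull ℝ (Set.range u) ⊆
        {x | ∃ a : Fin s → ℝ, (∀ i, 0 ≤ a i) ∧ ∑ i, a i = 1 ∧ x = ∑ i, a i • u i} := by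
      apply convexHull_min
      · rintro y ⟨i, rfl⟩
        refine ⟨fun j => if j = i then 1 else 0, fun j => by positivity, by simp, ?_⟩
        simp [ite_smul]
      · rintro y ⟨a, ha, hasum, rfl⟩ z ⟨b, hb, hbsum, rfl⟩ p q hp hq hpq
        refine ⟨fun i => p * a i + q * b i, fun i => add_nonneg (mul_nonneg hp (ha i)) (mul_nonneg hq (hb i)), ?_, ?_⟩
        · rw [Finset.sum_add_distrib, ← Finset.mul_sum, ← Finset.mul_sum, hasum, hbsum]
          simpa using hpq
        · rw [Finset.smul_sum, Finset.smul_sum, ← Finset.sum_add_distrib]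
          apply Finset.sum_congr rfl
          intro i _
          simp [add_smul, smul_smul]
    exact hsub hx
  · rintro ⟨a, ha, hasum, rfl⟩
    exact Convex.sum_mem (convex_convexHull ℝ _) (fun i _ => ha i) hasum
      (fun i _ => subset_convexHull ℝ _ ⟨i, rfl⟩)

/-- Q ⊆ the cone. -/
lemma Q_subset_cone : convexHull ℝ (Set.range u) ⊆ coneOf u := by
  intro x hx
  obtain ⟨a, ha, _, rfl⟩ := (memQ_iff u x).mp hx
  exact ⟨a, ha, rfl⟩

/-- 0 is not in Q (pointedness + nonzero generators). -/
lemma zero_not_mem_Q (hpt : PointedGens u) (hprim : ∀ i, IsPrimitive (u i)) :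
    (0 : Fin n → ℝ) ∉ convexHull ℝ (Set.range u) := by
  intro h0
  obtain ⟨a, ha, hasum, hzero⟩ := (memQ_iff u 0).mp h0
  have hex : ∃ i, 0 < a i := by
    by_contra h
    push_neg at h
    have : ∑ i, a i ≤ 0 := Finset.sum_nonpos fun i _ => h i
    linarith
  obtain ⟨i, hi⟩ := hex
  have hmem : u i ∈ coneOf u := by
    refine ⟨fun j => if j = i then 1 else 0, fun j => by positivity, ?_⟩
    simp [ite_smul]
  have hneg : -u i ∈ coneOf u := by
    refine ⟨fun j => if j = i then 0 else (a i)⁻¹ * a j, fun j => ?_, ?_⟩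
    · dsimp only; split_ifs
      · exact le_refl 0
      · exact mul_nonneg (inv_nonneg.mpr (ha i)) (ha _)
    · have e1 : (0 : Fin n → ℝ) = a i • u i + ∑ j ∈ Finset.univ.erase i, a j • u j := by
        rw [hzero]
        exact (Finset.add_sum_erase _ _ (Finset.mem_univ i)).symm
      have e2 : ∑ j ∈ Finset.univ.erase i, a j • u j = -(a i • u i) :=
        eq_neg_of_add_eq_zero_right e1.symm
      have e3 : ∑ j, (if j = i then 0 else (a i)⁻¹ * a j) • u j
          = (if i = i then 0 else (a i)⁻¹ * a i) • u i
            + ∑ j ∈ Finset.univ.erase i, (if j = i then 0 else (a i)⁻¹ * a j) • u j :=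
        (Finset.add_sum_erase _ _ (Finset.mem_univ i)).symm
      rw [e3, if_pos rfl, zero_smul, zero_add,
        Finset.sum_congr rfl (fun j hj => by
          rw [if_neg (Finset.ne_of_mem_erase hj), mul_smul])]
      rw [← Finset.smul_sum, e2, smul_neg, smul_smul, inv_mul_cancel₀ hi.ne', one_smul]
  have := hpt (u i) hmem hneg
  exact (hprim i).2.1 this

/-- A strictly positive dual functional. -/
lemma exists_dual_pos (hpt : PointedGens u) (hprim : ∀ i, IsPrimitive (u i)) :
    ∃ f : (Fin n → ℝ) →L[ℝ] ℝ, ∀ i, 1 ≤ f (u i) := by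
  have hQconv : Convex ℝ (convexHull ℝ (Set.range u)) := convex_convexHull ℝ _
  have hQclosed : IsClosed (convexHull ℝ (Set.range u)) :=
    ((Set.finite_range u).isCompact_convexHull ℝ).isClosed
  obtain ⟨f, c, hfc, hc⟩ := geometric_hahn_banach_point_closed hQconv hQclosed
    (zero_not_mem_Q u hpt hprim)
  have hc0 : 0 < c := by simpa using hfc
  refine ⟨c⁻¹ • f, fun i => ?_⟩
  have hui : u i ∈ convexHull ℝ (Set.range u) := subset_convexHull ℝ _ ⟨i, rfl⟩
  have := hc _ hui
  have : c⁻¹ * c ≤ c⁻¹ * f (u i) := by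
    apply mul_le_mul_of_nonneg_left this.le (inv_nonneg.mpr hc0.le)
  simpa [inv_mul_cancel₀ hc0.ne'] using this

/-- Weak duality: the coefficient sum of a nonneg representation is at most `f x`. -/
lemma sum_le_dual {f : (Fin n → ℝ) →L[ℝ] ℝ} (hf : ∀ i, 1 ≤ f (u i))
    {a : Fin s → ℝ} (ha : ∀ i, 0 ≤ a i) : ∑ i, a i ≤ f (∑ i, a i • u i) := by
  rw [map_sum]
  apply Finset.sum_le_sum
  intro i _
  rw [map_smul]
  calc a i = a i * 1 := (mul_one _).symm
  _ ≤ a i * f (u i) := mul_le_mul_of_nonneg_left (hf i) (ha i)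
  _ = a i • f (u i) := rfl

lemma bddAbove_reprSums (hpt : PointedGens u) (hprim : ∀ i, IsPrimitive (u i))
    (x : Fin n → ℝ) : BddAbove (reprSums u x) := by
  obtain ⟨f, hf⟩ := exists_dual_pos u hpt hprim
  refine ⟨f x, ?_⟩
  rintro t ⟨a, ha, rfl, rfl⟩
  exact sum_le_dual u hf ha

lemma coeffs_eq_zero (hpt : PointedGens u) (hprim : ∀ i, IsPrimitive (u i))
    {a : Fin s → ℝ} (ha : ∀ i, 0 ≤ a i) (h0 : ∑ i, a i • u i = 0) : ∀ i, a i = 0 := by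
  obtain ⟨f, hf⟩ := exists_dual_pos u hpt hprim
  have h1 : ∑ i, a i ≤ 0 := by
    have := sum_le_dual u hf ha
    rw [h0] at this
    simpa using this
  have h2 : ∑ i, a i = 0 := le_antisymm h1 (Finset.sum_nonneg fun i _ => ha i)
  intro i
  exact (Finset.sum_eq_zero_iff_of_nonneg fun i _ => ha i).mp h2 i (Finset.mem_univ i)

lemma lamMax_zero (hpt : PointedGens u) (hprim : ∀ i, IsPrimitive (u i)) :
    lamMax u 0 = 0 := by
  have : reprSums u 0 = {0} := by
    ext t
    constructor
    · rintro ⟨a, ha, h0, rfl⟩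
      have := coeffs_eq_zero u hpt hprim ha h0.symm
      simp [Finset.sum_congr rfl fun i _ => this i]
    · rintro rfl
      exact ⟨fun _ => 0, fun _ => le_refl 0, by simp, by simp⟩
  rw [lamMax, this, csSup_singleton]

lemma mem_reprSums_smul {c : ℝ} (hc : 0 < c) {x : Fin n → ℝ} {t : ℝ}
    (ht : t ∈ reprSums u x) : c * t ∈ reprSums u (c • x) := by
  obtain ⟨a, ha, rfl, rfl⟩ := ht
  refine ⟨fun i => c * a i, fun i => mul_nonneg hc.le (ha i), ?_, by rw [Finset.mul_sum]⟩
  rw [Finset.smul_sum]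
  exact Finset.sum_congr rfl fun i _ => by rw [smul_smul]

lemma reprSums_smul {c : ℝ} (hc : 0 < c) (x : Fin n → ℝ) :
    reprSums u (c • x) = (fun t => c * t) '' reprSums u x := by
  ext t
  constructor
  · intro ht
    have h2 : c⁻¹ * t ∈ reprSums u (c⁻¹ • c • x) := mem_reprSums_smul u (inv_pos.mpr hc) ht
    rw [inv_smul_smul₀ hc.ne'] at h2
    exact ⟨c⁻¹ * t, h2, by field_simp⟩
  · rintro ⟨t', ht', rfl⟩
    exact mem_reprSums_smul u hc ht'

lemma sSup_mul_image {c : ℝ} (hc : 0 < c) (S : Set ℝ) :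
    sSup ((fun t => c * t) '' S) = c * sSup S := by
  rcases S.eq_empty_or_nonempty with rfl | hne
  · simp [Real.sSup_empty]
  by_cases hbdd : BddAbove S
  · apply IsLUB.csSup_eq _ (hne.image _)
    constructor
    · rintro y ⟨t, ht, rfl⟩
      exact mul_le_mul_of_nonneg_left (le_csSup hbdd ht) hc.le
    · intro b hb
      have : sSup S ≤ c⁻¹ * b := by
        apply csSup_le hne
        intro t ht
        have := hb ⟨t, ht, rfl⟩
        rw [← mul_le_mul_iff_right₀ hc]  -- c * t ≤ c * (c⁻¹ * b)
        calc c * t ≤ b := this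
        _ = c * (c⁻¹ * b) := by field_simp
      calc c * sSup S ≤ c * (c⁻¹ * b) := mul_le_mul_of_nonneg_left this hc.le
      _ = b := by field_simp
  · have hbdd' : ¬ BddAbove ((fun t => c * t) '' S) := by
      intro ⟨M, hM⟩
      refine hbdd ⟨c⁻¹ * M, fun t ht => ?_⟩
      have := hM ⟨t, ht, rfl⟩
      calc t = c⁻¹ * (c * t) := by field_simp
      _ ≤ c⁻¹ * M := mul_le_mul_of_nonneg_left this (inv_nonneg.mpr hc.le)
    rw [Real.sSup_of_not_bddAbove hbdd, Real.sSup_of_not_bddAbove hbdd', mul_zero]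

lemma lamMax_smul {c : ℝ} (hc : 0 < c) (x : Fin n → ℝ) :
    lamMax u (c • x) = c * lamMax u x := by
  rw [lamMax, reprSums_smul u hc, sSup_mul_image hc, lamMax]

/-- The maximum coefficient sum is attained. -/
lemma exists_lamMax_repr (hpt : PointedGens u) (hprim : ∀ i, IsPrimitive (u i))
    {x : Fin n → ℝ} (hx : x ∈ coneOf u) :
    ∃ a : Fin s → ℝ, (∀ i, 0 ≤ a i) ∧ x = ∑ i, a i • u i ∧ ∑ i, a i = lamMax u x := by
  obtain ⟨f, hf⟩ := exists_dual_pos u hpt hprim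
  set A : Set (Fin s → ℝ) := {a | (∀ i, 0 ≤ a i) ∧ x = ∑ i, a i • u i} with hA
  have hAne : A.Nonempty := hx
  have hsumcont : Continuous (fun a : Fin s → ℝ => ∑ i, a i • u i) :=
    continuous_finset_sum _ fun i _ => (continuous_apply i).smul continuous_const
  have hAclosed : IsClosed A := by
    have h1 : IsClosed {a : Fin s → ℝ | ∀ i, 0 ≤ a i} := by
      have : {a : Fin s → ℝ | ∀ i, 0 ≤ a i} = ⋂ i, {a | 0 ≤ a i} := by
        ext a; simp [Set.mem_iInter]
      rw [this]
      exact isClosed_iInter fun i => isClosed_le continuous_const (continuous_apply i)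
    have h2 : IsClosed {a : Fin s → ℝ | x = ∑ i, a i • u i} := by
      have : {a : Fin s → ℝ | x = ∑ i, a i • u i} =
          (fun a : Fin s → ℝ => ∑ i, a i • u i) ⁻¹' {x} := by
        ext a; simp [eq_comm]
      rw [this]
      exact IsClosed.preimage hsumcont isClosed_singleton
    exact h1.inter h2
  have hAbdd : Bornology.IsBounded A := by
    apply Metric.isBounded_iff_subset_closedBall 0 |>.mpr
    refine ⟨max (f x) 0, ?_⟩
    rintro a ⟨ha, hax⟩
    rw [Metric.mem_closedBall, dist_zero_right]
    rw [pi_norm_le_iff_of_nonneg (le_max_right _ _)]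
    intro i
    rw [Real.norm_eq_abs, abs_of_nonneg (ha i)]
    have h1 : a i ≤ ∑ j, a j :=
      Finset.single_le_sum (fun j _ => ha j) (Finset.mem_univ i)
    have h2 : ∑ j, a j ≤ f x := by
      rw [hax]; exact sum_le_dual u hf ha
    exact le_max_of_le_left (h1.trans h2)
  have hAcomp : IsCompact A := Metric.isCompact_iff_isClosed_bounded.mpr ⟨hAclosed, hAbdd⟩
  have hcont : ContinuousOn (fun a : Fin s → ℝ => ∑ i, a i) A :=
    (continuous_finset_sum _ fun i _ => continuous_apply i).continuousOn
  obtain ⟨a, haA, hmax⟩ := hAcomp.exists_isMaxOn hAne hcont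
  refine ⟨a, haA.1, haA.2, ?_⟩
  have : IsGreatest (reprSums u x) (∑ i, a i) := by
    constructor
    · exact ⟨a, haA.1, haA.2, rfl⟩
    · rintro t ⟨b, hb, hbx, rfl⟩
      exact hmax ⟨hb, hbx⟩
  exact (this.csSup_eq).symm

/-- Key duality: if `z ∈ Q` and `lamMax z = 1`, there is a linear functional `l` with
`l(uᵢ) ≥ 1` for all `i` and `l(z) = 1`. -/
lemma key_dual (hpt : PointedGens u) (hprim : ∀ i, IsPrimitive (u i))
    {z : Fin n → ℝ} (hz : z ∈ convexHull ℝ (Set.range u)) (h1 : lamMax u z = 1) :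
    ∃ l : (Fin n → ℝ) →L[ℝ] ℝ, (∀ i, 1 ≤ l (u i)) ∧ l z = 1 := by
  classical
  set w : Option (Fin s) → (Fin n → ℝ) × ℝ := fun o => Option.elim o ((-z, -1) : (Fin n → ℝ) × ℝ) (fun i => (u i, 1))
    with hw
  set T : Set ((Fin n → ℝ) × ℝ) := {p | ∃ a : Option (Fin s) → ℝ, (∀ o, 0 ≤ a o) ∧ p = ∑ o, a o • w o}
    with hT
  have hTclosed : IsClosed T := isClosed_cone w
  have hTconv : Convex ℝ T := by
    rintro p ⟨a, ha, rfl⟩ q ⟨b, hb, rfl⟩ α β hα hβ hαβ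
    refine ⟨fun o => α * a o + β * b o,
      fun o => add_nonneg (mul_nonneg hα (ha o)) (mul_nonneg hβ (hb o)), ?_⟩
    rw [Finset.smul_sum, Finset.smul_sum, ← Finset.sum_add_distrib]
    exact Finset.sum_congr rfl fun o _ => by simp [add_smul, smul_smul]
  have hTsmul : ∀ (r : ℝ), 0 ≤ r → ∀ p ∈ T, r • p ∈ T := by
    rintro r hr p ⟨a, ha, rfl⟩
    refine ⟨fun o => r * a o, fun o => mul_nonneg hr (ha o), ?_⟩
    rw [Finset.smul_sum]
    exact Finset.sum_congr rfl fun o _ => by rw [smul_smul]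
  -- component computation of elements of T
  have hcomp : ∀ a : Option (Fin s) → ℝ,
      (∑ o, a o • w o) = (∑ i, a (some i) • u i - a none • z,
        ∑ i, a (some i) - a none) := by
    intro a
    have hfst : (∑ o, a o • w o).1 = ∑ i, a (some i) • u i - a none • z := by
      rw [Prod.fst_sum, Fintype.sum_option]
      simp only [hw, Option.elim_none, Option.elim_some, Prod.smul_fst, smul_neg]
      abel
    have hsnd : (∑ o, a o • w o).2 = ∑ i, a (some i) - a none := by
      rw [Prod.snd_sum, Fintype.sum_option]
      simp only [hw, Option.elim_none, Option.elim_some, Prod.smul_snd, smul_eq_mul,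
        mul_one, mul_neg]
      ring
    exact Prod.ext hfst hsnd
  -- e = (0, 1) is not in T
  have he : (((0 : Fin n → ℝ), (1 : ℝ)) : (Fin n → ℝ) × ℝ) ∉ T := by
    rintro ⟨a, ha, hae⟩
    rw [hcomp a] at hae
    have hfst : ∑ i, a (some i) • u i - a none • z = 0 := (congrArg Prod.fst hae).symm
    have hsnd : ∑ i, a (some i) - a none = 1 := (congrArg Prod.snd hae).symm
    rcases eq_or_lt_of_le (ha none) with hnone | hnone
    · have h0 : ∑ i, a (some i) • u i = 0 := by
        rw [← hnone] at hfst
        simpa using hfst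
      have := coeffs_eq_zero u hpt hprim (fun i => ha (some i)) h0
      rw [← hnone] at hsnd
      simp [Finset.sum_congr rfl fun i _ => this i] at hsnd
    · -- a none > 0 : z has a representation with coefficient sum > 1
      set t := a none with hts
      have hzrep : z = ∑ i, (t⁻¹ * a (some i)) • u i := by
        have h2 : ∑ i, a (some i) • u i = t • z := sub_eq_zero.mp hfst
        calc z = t⁻¹ • (t • z) := (inv_smul_smul₀ hnone.ne' z).symm
        _ = t⁻¹ • ∑ i, a (some i) • u i := by rw [h2]
        _ = ∑ i, (t⁻¹ * a (some i)) • u i := by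
            rw [Finset.smul_sum]
            exact Finset.sum_congr rfl fun i _ => by rw [smul_smul]
      have hmem : (∑ i, t⁻¹ * a (some i)) ∈ reprSums u z :=
        ⟨fun i => t⁻¹ * a (some i),
          fun i => mul_nonneg (inv_nonneg.mpr hnone.le) (ha _), hzrep, rfl⟩
      have hsum : ∑ i, t⁻¹ * a (some i) = t⁻¹ * (1 + t) := by
        rw [← Finset.mul_sum]
        congr 1
        linarith
      have hgt : 1 < ∑ i, t⁻¹ * a (some i) := by
        rw [hsum]
        rw [mul_add, inv_mul_cancel₀ hnone.ne', mul_one]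
        have : 0 < t⁻¹ := inv_pos.mpr hnone
        linarith
      have hle : (∑ i, t⁻¹ * a (some i)) ≤ 1 := by
        rw [← h1]
        exact le_csSup (bddAbove_reprSums u hpt hprim z) hmem
      linarith
  -- separate e from T
  obtain ⟨f, c, hfe, hfT⟩ := geometric_hahn_banach_point_closed hTconv hTclosed he
  have h0T : (0 : (Fin n → ℝ) × ℝ) ∈ T := ⟨fun _ => 0, fun _ => le_refl 0, by simp⟩
  have hc0 : c < 0 := by simpa using hfT 0 h0T
  have hfnonneg : ∀ p ∈ T, 0 ≤ f p := by
    intro p hp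
    by_contra hneg
    push_neg at hneg
    have hr : 0 < c / f p := div_pos_of_neg_of_neg hc0 hneg
    have := hfT _ (hTsmul _ hr.le p hp)
    rw [map_smul, smul_eq_mul, div_mul_cancel₀ _ hneg.ne] at this
    exact lt_irrefl c this
  -- basic memberships
  have hvT : ∀ i, ((u i, (1:ℝ)) : (Fin n → ℝ) × ℝ) ∈ T := by
    intro i
    refine ⟨fun o => if o = some i then 1 else 0, fun o => by positivity, ?_⟩
    simp [ite_smul, hw]
  have hpT : ((z, (1:ℝ)) : (Fin n → ℝ) × ℝ) ∈ T := by
    obtain ⟨b, hb, hbsum, hbz⟩ := (memQ_iff u z).mp hz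
    refine ⟨fun o => Option.elim o 0 b, fun o => by cases o <;> simp [hb], ?_⟩
    rw [hcomp]
    simp only [Option.elim]
    rw [Prod.mk.injEq]
    constructor
    · rw [zero_smul, sub_zero, ← hbz]
    · rw [hbsum]; ring
  have hnpT : (((-z : Fin n → ℝ), (-1:ℝ)) : (Fin n → ℝ) × ℝ) ∈ T := by
    refine ⟨fun o => if o = none then 1 else 0, fun o => by positivity, ?_⟩
    simp [ite_smul, hw]
  -- f vanishes at (z,1)
  have hfp0 : f ((z, (1:ℝ)) : (Fin n → ℝ) × ℝ) = 0 := by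
    have h1' := hfnonneg _ hpT
    have h2' := hfnonneg _ hnpT
    have : ((-z : Fin n → ℝ), (-1:ℝ)) = -((z, (1:ℝ)) : (Fin n → ℝ) × ℝ) := by simp [Prod.neg_mk]
    rw [this, map_neg] at h2'
    linarith
  -- decompose f
  set c₀ := f ((0 : Fin n → ℝ), (1:ℝ)) with hc₀
  have hc₀neg : c₀ < 0 := by
    have : c₀ < c := hfe
    linarith
  have hsplit : ∀ (x : Fin n → ℝ) (r : ℝ), f ((x, r) : (Fin n → ℝ) × ℝ) = f ((x, 0) : (Fin n → ℝ) × ℝ) + r * c₀ := by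
    intro x r
    have : ((x, r) : (Fin n → ℝ) × ℝ) = ((x, 0) : (Fin n → ℝ) × ℝ) + r • (((0:Fin n → ℝ), (1:ℝ)) : (Fin n → ℝ) × ℝ) := by
      rw [Prod.smul_mk]
      simp
    rw [this, map_add, map_smul, smul_eq_mul, hc₀]
  set l : (Fin n → ℝ) →L[ℝ] ℝ :=
    (-c₀)⁻¹ • (f.comp (ContinuousLinearMap.inl ℝ (Fin n → ℝ) ℝ)) with hl
  have hlval : ∀ x : Fin n → ℝ, l x = (-c₀)⁻¹ * f ((x, 0) : (Fin n → ℝ) × ℝ) := fun x => rfl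
  have hc₀pos : 0 < -c₀ := by linarith
  refine ⟨l, fun i => ?_, ?_⟩
  · have := hfnonneg _ (hvT i)
    rw [hsplit (u i) 1, one_mul] at this
    rw [hlval]
    have h3 : -c₀ ≤ f ((u i, 0) : (Fin n → ℝ) × ℝ) := by linarith
    calc (1:ℝ) = (-c₀)⁻¹ * (-c₀) := (inv_mul_cancel₀ hc₀pos.ne').symm
    _ ≤ (-c₀)⁻¹ * f ((u i, 0) : (Fin n → ℝ) × ℝ) :=
        mul_le_mul_of_nonneg_left h3 (inv_nonneg.mpr hc₀pos.le)
  · rw [hlval]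
    have := hfp0
    rw [hsplit z 1, one_mul] at this
    have h4 : f ((z, 0) : (Fin n → ℝ) × ℝ) = -c₀ := by linarith
    rw [h4, inv_mul_cancel₀ hc₀pos.ne']

/-- Every point of Q with lamMax = 1 lies in an exposed face on which lamMax ≡ 1. -/
lemma exists_face (hpt : PointedGens u) (hprim : ∀ i, IsPrimitive (u i))
    {z : Fin n → ℝ} (hz : z ∈ convexHull ℝ (Set.range u)) (h1 : lamMax u z = 1) :
    ∃ F : Set (Fin n → ℝ), (IsExposed ℝ (convexHull ℝ (Set.range u)) F ∧
      ∀ x ∈ F, lamMax u x = 1) ∧ z ∈ F := by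
  obtain ⟨l, hl, hlz⟩ := key_dual u hpt hprim hz h1
  set Q := convexHull ℝ (Set.range u) with hQ
  have hQl : ∀ y ∈ Q, 1 ≤ l y := by
    intro y hy
    obtain ⟨b, hb, hbsum, rfl⟩ := (memQ_iff u y).mp hy
    rw [map_sum]
    calc (1:ℝ) = ∑ i, b i := hbsum.symm
    _ ≤ ∑ i, l (b i • u i) := by
        apply Finset.sum_le_sum
        intro i _
        rw [map_smul, smul_eq_mul]
        calc b i = b i * 1 := (mul_one _).symm
        _ ≤ b i * l (u i) := mul_le_mul_of_nonneg_left (hl i) (hb i)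
  set F := {x ∈ Q | ∀ y ∈ Q, (-l) y ≤ (-l) x} with hF
  have hzF : z ∈ F := by
    refine ⟨hz, fun y hy => ?_⟩
    simp only [ContinuousLinearMap.neg_apply, neg_le_neg_iff]
    rw [hlz]
    exact hQl y hy
  refine ⟨F, ⟨fun _ => ⟨-l, rfl⟩, ?_⟩, hzF⟩
  intro x hx
  obtain ⟨hxQ, hxmax⟩ := hx
  have hlx : l x ≤ 1 := by
    have := hxmax z hz
    simp only [ContinuousLinearMap.neg_apply, neg_le_neg_iff] at this
    rw [hlz] at this
    exact this
  have hub : ∀ t ∈ reprSums u x, t ≤ 1 := by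
    rintro t ⟨a, ha, rfl, rfl⟩
    have : ∑ i, a i ≤ l (∑ i, a i • u i) := by
      rw [map_sum]
      apply Finset.sum_le_sum
      intro i _
      rw [map_smul, smul_eq_mul]
      calc a i = a i * 1 := (mul_one _).symm
      _ ≤ a i * l (u i) := mul_le_mul_of_nonneg_left (hl i) (ha i)
    exact this.trans hlx
  have hmem1 : (1:ℝ) ∈ reprSums u x := by
    obtain ⟨b, hb, hbsum, hbx⟩ := (memQ_iff u x).mp hxQ
    exact ⟨b, hb, hbx, hbsum.symm⟩
  exact le_antisymm (csSup_le ⟨1, hmem1⟩ hub) (le_csSup ⟨1, hub⟩ hmem1)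

/-- On a set where lamMax ≡ 1 which is convex, any vanishing combination has zero
coefficient sum. -/
lemma sum_eq_zero_of_comb (hpt : PointedGens u) (hprim : ∀ i, IsPrimitive (u i))
    {F : Set (Fin n → ℝ)} (hconv : Convex ℝ F) (hF1 : ∀ x ∈ F, lamMax u x = 1)
    {m : ℕ} (q : Fin m → (Fin n → ℝ)) (hq : ∀ j, q j ∈ F) (d : Fin m → ℝ)
    (hd : ∑ j, d j • q j = 0) : ∑ j, d j = 0 := by
  classical
  set dp : Fin m → ℝ := fun j => max (d j) 0 with hdp
  set dm : Fin m → ℝ := fun j => max (-d j) 0 with hdm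
  have hdpm : ∀ j, d j = dp j - dm j := by
    intro j
    simp only [hdp, hdm]
    rcases le_or_gt 0 (d j) with h | h
    · rw [max_eq_left h, max_eq_right (by linarith)]; ring
    · rw [max_eq_right h.le, max_eq_left (by linarith)]; ring
  have hdpnn : ∀ j, 0 ≤ dp j := fun j => le_max_right _ _
  have hdmnn : ∀ j, 0 ≤ dm j := fun j => le_max_right _ _
  have hveq : ∑ j, dp j • q j = ∑ j, dm j • q j := by
    have : ∑ j, (dp j - dm j) • q j = 0 := by
      rw [← hd]
      exact Finset.sum_congr rfl fun j _ => by rw [← hdpm]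
    rw [Finset.sum_congr rfl fun j _ => sub_smul (dp j) (dm j) (q j),
      Finset.sum_sub_distrib] at this
    exact sub_eq_zero.mp this
  have claim : ∀ c : Fin m → ℝ, (∀ j, 0 ≤ c j) → 0 < ∑ j, c j →
      lamMax u (∑ j, c j • q j) = ∑ j, c j := by
    intro c hc hcpos
    set S := ∑ j, c j with hS
    have hwF : (S⁻¹ • ∑ j, c j • q j) ∈ F := by
      have : S⁻¹ • ∑ j, c j • q j = ∑ j, (S⁻¹ * c j) • q j := by
        rw [Finset.smul_sum]
        exact Finset.sum_congr rfl fun j _ => by rw [smul_smul]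
      rw [this]
      apply hconv.sum_mem (fun j _ => mul_nonneg (inv_nonneg.mpr hcpos.le) (hc j))
      · rw [← Finset.mul_sum, ← hS, inv_mul_cancel₀ hcpos.ne']
      · exact fun j _ => hq j
    have h1 : lamMax u (S⁻¹ • ∑ j, c j • q j) = 1 := hF1 _ hwF
    have h2 : lamMax u (S • S⁻¹ • ∑ j, c j • q j) = S := by
      rw [lamMax_smul u hcpos, h1, mul_one]
    rw [smul_inv_smul₀ hcpos.ne'] at h2
    exact h2
  rcases eq_or_lt_of_le (Finset.sum_nonneg fun j _ => hdpnn j) with hA | hA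
  · rcases eq_or_lt_of_le (Finset.sum_nonneg fun j _ => hdmnn j) with hB | hB
    · -- both zero
      have : ∑ j, d j = ∑ j, dp j - ∑ j, dm j := by
        rw [← Finset.sum_sub_distrib]
        exact Finset.sum_congr rfl fun j _ => hdpm j
      rw [this, ← hA, ← hB, sub_zero]
    · -- A = 0, B > 0
      exfalso
      have hdp0 : ∀ j, dp j = 0 := fun j =>
        (Finset.sum_eq_zero_iff_of_nonneg fun j _ => hdpnn j).mp hA.symm j (Finset.mem_univ j)
      have hv0 : ∑ j, dm j • q j = 0 := by
        rw [← hveq]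
        rw [Finset.sum_congr rfl fun j _ => by rw [hdp0 j, zero_smul]]
        simp
      have := claim dm hdmnn hB
      rw [hv0, lamMax_zero u hpt hprim] at this
      linarith
  · rcases eq_or_lt_of_le (Finset.sum_nonneg fun j _ => hdmnn j) with hB | hB
    · exfalso
      have hdm0 : ∀ j, dm j = 0 := fun j =>
        (Finset.sum_eq_zero_iff_of_nonneg fun j _ => hdmnn j).mp hB.symm j (Finset.mem_univ j)
      have hv0 : ∑ j, dp j • q j = 0 := by
        rw [hveq]
        rw [Finset.sum_congr rfl fun j _ => by rw [hdm0 j, zero_smul]]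
        simp
      have := claim dp hdpnn hA
      rw [hv0, lamMax_zero u hpt hprim] at this
      linarith
    · have hAB : ∑ j, dp j = ∑ j, dm j := by
        have h1 := claim dp hdpnn hA
        have h2 := claim dm hdmnn hB
        rw [hveq] at h1
        rw [h1] at h2
        linarith [h1, h2]
      have : ∑ j, d j = ∑ j, dp j - ∑ j, dm j := by
        rw [← Finset.sum_sub_distrib]
        exact Finset.sum_congr rfl fun j _ => hdpm j
      rw [this, hAB, sub_self]

/-- A linear functional equal to 1 at `x₀` and vanishing on a submodule avoiding `x₀`. -/
lemma exists_dual_vanishing {V : Submodule ℝ (Fin n → ℝ)} {x₀ : Fin n → ℝ} (h : x₀ ∉ V) :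
    ∃ f : (Fin n → ℝ) →ₗ[ℝ] ℝ, f x₀ = 1 ∧ ∀ v ∈ V, f v = 0 := by
  have hπ : V.mkQ x₀ ≠ 0 := by
    rw [Submodule.mkQ_apply, ne_eq, Submodule.Quotient.mk_eq_zero]
    exact h
  have : ¬ ∀ φ : Module.Dual ℝ ((Fin n → ℝ) ⧸ V), φ (V.mkQ x₀) = 0 := by
    rw [Module.forall_dual_apply_eq_zero_iff]
    exact hπ
  push_neg at this
  obtain ⟨φ, hφ⟩ := this
  refine ⟨(φ (V.mkQ x₀))⁻¹ • (φ.comp V.mkQ), ?_, ?_⟩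
  · have h2 : ((φ (V.mkQ x₀))⁻¹ • (φ.comp V.mkQ)) x₀
        = (φ (V.mkQ x₀))⁻¹ * (φ (V.mkQ x₀)) := rfl
    rw [h2, inv_mul_cancel₀ hφ]
  · intro v hv
    have h0 : V.mkQ v = 0 := by rwa [Submodule.mkQ_apply, Submodule.Quotient.mk_eq_zero]
    have h2 : ((φ (V.mkQ x₀))⁻¹ • (φ.comp V.mkQ)) v
        = (φ (V.mkQ x₀))⁻¹ * (φ (V.mkQ v)) := rfl
    rw [h2, h0, map_zero, mul_zero]

end Helpers

/-- λ_max is piecewise linear: σ∨ is the union of the cones over the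
lower faces of Q = conv{u₁,…,u_s} (the exposed faces on which λ_max ≡ 1), and λ_max
is linear on the cone over each lower face. -/
theorem lamMax_piecewise_linear {n s : ℕ} (u : Fin s → (Fin n → ℝ)) (hs : 0 < s)
    (hpt : PointedGens u) (hfd : FullDim u)
    (hprim : ∀ i, IsPrimitive (u i)) (hext : ExtremalGens u) :
    (coneOf u =
      ⋃ F ∈ {F : Set (Fin n → ℝ) |
          IsExposed ℝ (convexHull ℝ (Set.range u)) F ∧ ∀ x ∈ F, lamMax u x = 1},
        {y | ∃ c : ℝ, 0 ≤ c ∧ ∃ x ∈ F, y = c • x}) ∧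
    (∀ F : Set (Fin n → ℝ),
      IsExposed ℝ (convexHull ℝ (Set.range u)) F → (∀ x ∈ F, lamMax u x = 1) →
      ∃ L : (Fin n → ℝ) →ₗ[ℝ] ℝ,
        ∀ y ∈ {y | ∃ c : ℝ, 0 ≤ c ∧ ∃ x ∈ F, y = c • x}, lamMax u y = L y) := by
  classical
  have main : ∀ x, x ∈ coneOf u → x ≠ 0 → ∃ F : Set (Fin n → ℝ),
      (IsExposed ℝ (convexHull ℝ (Set.range u)) F ∧ ∀ y ∈ F, lamMax u y = 1) ∧
      ∃ c : ℝ, 0 ≤ c ∧ ∃ z ∈ F, x = c • z := by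
    intro x hx hx0
    obtain ⟨a, ha, hax, hasum⟩ := exists_lamMax_repr u hpt hprim hx
    have hlamnn : 0 ≤ lamMax u x := hasum ▸ Finset.sum_nonneg fun i _ => ha i
    have hlampos : 0 < lamMax u x := by
      rcases eq_or_lt_of_le hlamnn with h | h
      · exfalso
        apply hx0
        have hsum0 : ∑ i, a i = 0 := by rw [hasum, ← h]
        have := (Finset.sum_eq_zero_iff_of_nonneg fun i _ => ha i).mp hsum0
        rw [hax]
        exact Finset.sum_eq_zero fun i _ => by rw [this i (Finset.mem_univ i), zero_smul]
      · exact h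
    set lam := lamMax u x with hlam
    have hz1 : lamMax u (lam⁻¹ • x) = 1 := by
      rw [lamMax_smul u (inv_pos.mpr hlampos), ← hlam, inv_mul_cancel₀ hlampos.ne']
    have hzQ : lam⁻¹ • x ∈ convexHull ℝ (Set.range u) := by
      rw [memQ_iff]
      refine ⟨fun i => lam⁻¹ * a i,
        fun i => mul_nonneg (inv_nonneg.mpr hlampos.le) (ha i), ?_, ?_⟩
      · rw [← Finset.mul_sum, hasum, inv_mul_cancel₀ hlampos.ne']
      · rw [hax, Finset.smul_sum]
        exact Finset.sum_congr rfl fun i _ => by rw [smul_smul]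
    obtain ⟨F, hFcond, hzF⟩ := exists_face u hpt hprim hzQ hz1
    exact ⟨F, hFcond, lam, hlampos.le, lam⁻¹ • x, hzF,
      (smul_inv_smul₀ hlampos.ne' x).symm⟩
  constructor
  · ext x
    simp only [Set.mem_iUnion, Set.mem_setOf_eq]
    constructor
    · intro hx
      by_cases hx0 : x = 0
      · have hu0 : u ⟨0, hs⟩ ∈ coneOf u := by
          refine ⟨fun j => if j = ⟨0, hs⟩ then 1 else 0, fun j => by positivity, ?_⟩
          simp [ite_smul]
        obtain ⟨F, hFcond, c, hc, z, hzF, _⟩ :=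
          main _ hu0 (hprim ⟨0, hs⟩).2.1
        exact ⟨F, hFcond, 0, le_refl 0, z, hzF, by rw [hx0, zero_smul]⟩
      · obtain ⟨F, hFcond, c, hc, z, hzF, hxz⟩ := main x hx hx0
        exact ⟨F, hFcond, c, hc, z, hzF, hxz⟩
    · rintro ⟨F, ⟨hexp, hF1⟩, c, hc, z, hzF, rfl⟩
      have hzQ : z ∈ convexHull ℝ (Set.range u) := hexp.subset hzF
      obtain ⟨a, ha, rfl⟩ := Q_subset_cone u hzQ
      refine ⟨fun i => c * a i, fun i => mul_nonneg hc (ha i), ?_⟩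
      rw [Finset.smul_sum]
      exact Finset.sum_congr rfl fun i _ => by rw [smul_smul]
  · intro F hexp hF1
    rcases F.eq_empty_or_nonempty with rfl | ⟨x₀, hx₀⟩
    · exact ⟨0, by rintro y ⟨c, hc, x, hx, rfl⟩; exact absurd hx (Set.notMem_empty x)⟩
    · set V := Submodule.span ℝ ((fun p => p - x₀) '' F) with hV
      have hx₀V : x₀ ∉ V := by
        intro hmem
        obtain ⟨m, cc, g, hsum⟩ := Submodule.mem_span_set'.mp hmem
        choose p hpF hpe using fun j => (g j).2
        have hpe' : ∀ j, p j - x₀ = (g j : Fin n → ℝ) := fun j => hpe j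
        set q : Fin (m+1) → (Fin n → ℝ) := Fin.cons x₀ p with hq
        set d : Fin (m+1) → ℝ := Fin.cons (-(1 + ∑ j, cc j)) cc with hd
        have hcomb : ∑ j, d j • q j = 0 := by
          simp only [Fin.sum_univ_succ, hq, hd, Fin.cons_zero, Fin.cons_succ]
          have hps : ∑ j, cc j • p j = x₀ + (∑ j, cc j) • x₀ := by
            have hstep : ∀ j, cc j • p j = cc j • (p j - x₀) + cc j • x₀ := by
              intro j
              rw [← smul_add, sub_add_cancel]
            rw [Finset.sum_congr rfl fun j _ => hstep j, Finset.sum_add_distrib]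
            congr 1
            · rw [Finset.sum_congr rfl fun j _ => by rw [hpe' j], hsum]
            · rw [← Finset.sum_smul]
          rw [hps]
          module
        have hqF : ∀ j, q j ∈ F := by
          intro j
          rcases Fin.eq_zero_or_eq_succ j with rfl | ⟨k, rfl⟩
          · simpa [hq] using hx₀
          · simpa [hq] using hpF k
        have hsumd := sum_eq_zero_of_comb u hpt hprim
          (hexp.convex (convex_convexHull ℝ _)) hF1 q hqF d hcomb
        simp only [Fin.sum_univ_succ, hd, Fin.cons_zero, Fin.cons_succ] at hsumd
        linarith
      obtain ⟨f, hfx₀, hfV⟩ := exists_dual_vanishing hx₀V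
      refine ⟨f, ?_⟩
      rintro y ⟨c, hc, x, hxF, rfl⟩
      have hfx : f x = 1 := by
        have hxV : x - x₀ ∈ V := Submodule.subset_span ⟨x, hxF, rfl⟩
        have h0 := hfV _ hxV
        rw [map_sub, hfx₀, sub_eq_zero] at h0
        exact h0
      rcases eq_or_lt_of_le hc with h | hcpos
      · rw [← h, zero_smul, lamMax_zero u hpt hprim, map_zero]
      · rw [lamMax_smul u hcpos, hF1 x hxF, mul_one, map_smul, smul_eq_mul, hfx, mul_one]
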